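/- Consider a global solution (λ, μ, φ) on [1,∞) of the plane symmetric (k = 0) Einstein–scalar field system in areal coordinates with vanishing Vlasov matter (f ≡ 0), normalized so that e^{(μ−λ)(t,r)} = c·t for a constant c > 0, and suppose |∂_tφ · ∂_rφ|(s,r) ≤ C₁/s for all s ≥ 1. Let (r(s), w(s)) solve the geodesic equations in coordinate time, so that w satisfies dw/ds = 4π s e^{2μ}( j·√(m² + w² + F/s²) − ρ·w ) + w/(2s), where m ≥ 0 and F ≥ 0 are constants, ρ = ½(e^{−2μ}(∂_tφ)² + e^{−2λ}(∂_rφ)²) and j = −e^{−(λ+μ)} ∂_tφ ∂_rφ are evaluated at (s, r(s)). Then there is a constant C > 0 such that |w(t)| ≤ C t² for all t ≥ 1. -/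

import Mathlib

open MeasureTheory Real Filter

noncomputable section

/-- Partial derivative with respect to the first (time) variable. -/
def ptd (u : ℝ → ℝ → ℝ) (t r : ℝ) : ℝ := deriv (fun s => u s r) t

/-- Partial derivative with respect to the second (space) variable. -/
def prd (u : ℝ → ℝ → ℝ) (t r : ℝ) : ℝ := deriv (fun x => u t x) r

/-- The kinematic factor `√(1 + w² + F/t²)`. -/
def vq (t w F : ℝ) : ℝ := Real.sqrt (1 + w ^ 2 + F / t ^ 2)

/-- The energy density ρ. -/
def rho (lam mu phi : ℝ → ℝ → ℝ) (f : ℝ → ℝ → ℝ → ℝ → ℝ) (t r : ℝ) : ℝ :=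
  Real.pi / t ^ 2 * (∫ w : ℝ, ∫ F in Set.Ioi (0 : ℝ), vq t w F * f t r w F)
    + (1 / 2) * (Real.exp (-2 * mu t r) * (ptd phi t r) ^ 2
      + Real.exp (-2 * lam t r) * (prd phi t r) ^ 2)

/-- The radial pressure p. -/
def pres (lam mu phi : ℝ → ℝ → ℝ) (f : ℝ → ℝ → ℝ → ℝ → ℝ) (t r : ℝ) : ℝ :=
  Real.pi / t ^ 2 * (∫ w : ℝ, ∫ F in Set.Ioi (0 : ℝ), w ^ 2 / vq t w F * f t r w F)
    + (1 / 2) * (Real.exp (-2 * mu t r) * (ptd phi t r) ^ 2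
      + Real.exp (-2 * lam t r) * (prd phi t r) ^ 2)

/-- The momentum density j. -/
def jmom (lam mu phi : ℝ → ℝ → ℝ) (f : ℝ → ℝ → ℝ → ℝ → ℝ) (t r : ℝ) : ℝ :=
  Real.pi / t ^ 2 * (∫ w : ℝ, ∫ F in Set.Ioi (0 : ℝ), w * f t r w F)
    - Real.exp (-(lam t r + mu t r)) * ptd phi t r * prd phi t r

/-- The tangential pressure q. -/
def qmom (lam mu phi : ℝ → ℝ → ℝ) (f : ℝ → ℝ → ℝ → ℝ → ℝ) (t r : ℝ) : ℝ :=
  Real.pi / t ^ 4 * (∫ w : ℝ, ∫ F in Set.Ioi (0 : ℝ), F / vq t w F * f t r w F)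
    + Real.exp (-2 * mu t r) * (ptd phi t r) ^ 2
    - Real.exp (-2 * lam t r) * (prd phi t r) ^ 2

/-- Membership in the time domain `[1, T)` (with `T ≤ ∞` an extended real). -/
def InDom (T : EReal) (t : ℝ) : Prop := 1 ≤ t ∧ (t : EReal) < T

/-- A regular solution of the surface-symmetric Einstein–Vlasov–scalar field system
in areal coordinates on the time interval `[1, T)`, with curvature parameter `k`.
All unknowns are periodic of period 1 in `r`, `f` is nonnegative with bounded
support in `(w, F)` locally uniformly in `t`, and the Vlasov, Einstein and wave
equations hold on the domain. -/
structure IsEVS (k : ℝ) (T : EReal) (lam mu phi : ℝ → ℝ → ℝ)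
    (f : ℝ → ℝ → ℝ → ℝ → ℝ) : Prop where
  hT : (1 : EReal) < T
  f_nonneg : ∀ t r w F, 0 ≤ f t r w F
  per_lam : ∀ t r, lam t (r + 1) = lam t r
  per_mu : ∀ t r, mu t (r + 1) = mu t r
  per_phi : ∀ t r, phi t (r + 1) = phi t r
  per_f : ∀ t r w F, f t (r + 1) w F = f t r w F
  supp_bdd : ∀ T' : ℝ, 1 ≤ T' → (T' : EReal) < T →
    ∃ C : ℝ, ∀ t r w F, 1 ≤ t → t ≤ T' → f t r w F ≠ 0 → |w| ≤ C ∧ F ≤ C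
  reg_lam_t : ∀ t r, InDom T t → DifferentiableAt ℝ (fun s => lam s r) t
  reg_lam_r : ∀ t r, InDom T t → DifferentiableAt ℝ (fun x => lam t x) r
  reg_lam_tt : ∀ t r, InDom T t → DifferentiableAt ℝ (fun s => ptd lam s r) t
  reg_mu_t : ∀ t r, InDom T t → DifferentiableAt ℝ (fun s => mu s r) t
  reg_mu_r : ∀ t r, InDom T t → DifferentiableAt ℝ (fun x => mu t x) r
  reg_mu_rr : ∀ t r, InDom T t → DifferentiableAt ℝ (fun x => prd mu t x) r
  reg_phi_t : ∀ t r, InDom T t → DifferentiableAt ℝ (fun s => phi s r) t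
  reg_phi_r : ∀ t r, InDom T t → DifferentiableAt ℝ (fun x => phi t x) r
  reg_phi_tt : ∀ t r, InDom T t → DifferentiableAt ℝ (fun s => ptd phi s r) t
  reg_phi_rr : ∀ t r, InDom T t → DifferentiableAt ℝ (fun x => prd phi t x) r
  reg_f : ∀ t r w F, InDom T t → 0 ≤ F →
    DifferentiableAt ℝ (fun s => f s r w F) t ∧
    DifferentiableAt ℝ (fun x => f t x w F) r ∧
    DifferentiableAt ℝ (fun v => f t r v F) w
  vlasov : ∀ t r w F, InDom T t → 0 ≤ F →
    deriv (fun s => f s r w F) t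
      + Real.exp (mu t r - lam t r) * w / vq t w F * deriv (fun x => f t x w F) r
      - (ptd lam t r * w + Real.exp (mu t r - lam t r) * prd mu t r * vq t w F)
        * deriv (fun v => f t r v F) w = 0
  ee1 : ∀ t r, InDom T t →
    Real.exp (-2 * mu t r) * (2 * t * ptd lam t r + 1) + k
      = 8 * Real.pi * t ^ 2 * rho lam mu phi f t r
  ee2 : ∀ t r, InDom T t →
    Real.exp (-2 * mu t r) * (2 * t * ptd mu t r - 1) - k
      = 8 * Real.pi * t ^ 2 * pres lam mu phi f t r
  ee3 : ∀ t r, InDom T t →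
    prd mu t r = -(4 * Real.pi) * t * Real.exp (lam t r + mu t r) * jmom lam mu phi f t r
  ee4 : ∀ t r, InDom T t →
    Real.exp (-2 * lam t r)
        * (deriv (fun x => prd mu t x) r + prd mu t r * (prd mu t r - prd lam t r))
      - Real.exp (-2 * mu t r)
        * (deriv (fun s => ptd lam s r) t + (ptd lam t r + 1 / t) * (ptd lam t r - ptd mu t r))
      = 4 * Real.pi * qmom lam mu phi f t r
  wave : ∀ t r, InDom T t →
    Real.exp (-2 * lam t r) * deriv (fun x => prd phi t x) r
      - Real.exp (-2 * mu t r) * deriv (fun s => ptd phi s r) t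
      - Real.exp (-2 * mu t r) * (ptd lam t r - ptd mu t r + 2 / t) * ptd phi t r
      - Real.exp (-2 * lam t r) * (prd lam t r - prd mu t r) * prd phi t r = 0

/-- A regular solution on `[1, T)` is right maximal if it is not the restriction of a
regular solution on a strictly larger interval `[1, T')`. -/
def RightMaximal (k : ℝ) (T : EReal) (lam mu phi : ℝ → ℝ → ℝ)
    (f : ℝ → ℝ → ℝ → ℝ → ℝ) : Prop :=
  IsEVS k T lam mu phi f ∧
  ∀ (T' : EReal) (lam' mu' phi' : ℝ → ℝ → ℝ) (f' : ℝ → ℝ → ℝ → ℝ → ℝ),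
    T < T' → IsEVS k T' lam' mu' phi' f' →
    ¬ (∀ t r w F, InDom T t →
        lam' t r = lam t r ∧ mu' t r = mu t r ∧ phi' t r = phi t r ∧
        f' t r w F = f t r w F)


private lemma aux_ineq (c C₁ s a b L M v G S u : ℝ)
    (hc : 0 < c) (hC₁ : 0 ≤ C₁) (hs : 1 ≤ s)
    (hG0 : 0 ≤ G) (hGle : G ≤ |v| + S) (hS0 : 0 ≤ S)
    (hnorm : Real.exp (M - L) = c * s)
    (hab : |a * b| ≤ C₁ / s)
    (hu : |v| ≤ u) (hu0 : 0 < u) :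
    v * (4 * Real.pi * s * Real.exp (2 * M) *
        (-(Real.exp (-(L + M)) * a * b) * G
          - 1 / 2 * (Real.exp (-2 * M) * a ^ 2 + Real.exp (-2 * L) * b ^ 2) * v)
      + v / (2 * s))
    ≤ 4 * Real.pi * c * C₁ * S * s * u + u ^ 2 / (2 * s) := by
  have hs0 : (0:ℝ) < s := by linarith
  set D : ℝ := Real.exp (-(L + M)) * |a * b| with hD_def
  have hD0 : 0 ≤ D := by positivity
  set R : ℝ := 1 / 2 * (Real.exp (-2 * M) * a ^ 2 + Real.exp (-2 * L) * b ^ 2)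
    with hR_def
  have hDR : D ≤ R := by
    rw [hD_def, hR_def]
    have h2 : Real.exp (-(L + M)) = Real.exp (-M) * Real.exp (-L) := by
      rw [← Real.exp_add]; ring_nf
    have e1 : Real.exp (-M) ^ 2 = Real.exp (-2 * M) := by
      rw [sq, ← Real.exp_add]; ring_nf
    have e2 : Real.exp (-L) ^ 2 = Real.exp (-2 * L) := by
      rw [sq, ← Real.exp_add]; ring_nf
    rw [h2, abs_mul]
    nlinarith [sq_nonneg (Real.exp (-M) * |a| - Real.exp (-L) * |b|),
      sq_abs a, sq_abs b]
  have hE : Real.exp (2 * M) * Real.exp (-(L + M)) = c * s := by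
    rw [← Real.exp_add]
    have h : 2 * M + -(L + M) = M - L := by ring
    rw [h]; exact hnorm
  have hED : Real.exp (2 * M) * D ≤ c * C₁ := by
    rw [hD_def]
    calc Real.exp (2 * M) * (Real.exp (-(L + M)) * |a * b|)
        = Real.exp (2 * M) * Real.exp (-(L + M)) * |a * b| := by ring
      _ = c * s * |a * b| := by rw [hE]
      _ ≤ c * s * (C₁ / s) := by
          apply mul_le_mul_of_nonneg_left hab (by positivity)
      _ = c * C₁ := by field_simp
  have hJv : -(Real.exp (-(L + M)) * a * b) * v ≤ D * |v| := by
    rw [hD_def]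
    calc -(Real.exp (-(L + M)) * a * b) * v
        ≤ |(-(Real.exp (-(L + M)) * a * b)) * v| := le_abs_self _
      _ = Real.exp (-(L + M)) * |a * b| * |v| := by
          rw [abs_mul, abs_neg]
          rw [show Real.exp (-(L + M)) * a * b
            = Real.exp (-(L + M)) * (a * b) by ring, abs_mul,
            abs_of_pos (Real.exp_pos _)]
  have bracket_le : (-(Real.exp (-(L + M)) * a * b)) * v * G - R * v ^ 2
      ≤ D * |v| * S := by
    have h1 : (-(Real.exp (-(L + M)) * a * b)) * v * G ≤ D * |v| * G :=
      mul_le_mul_of_nonneg_right hJv hG0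
    have h2 : D * |v| * G ≤ D * |v| * (|v| + S) :=
      mul_le_mul_of_nonneg_left hGle (by positivity)
    have h4 : D * |v| * (|v| + S) = D * v ^ 2 + D * |v| * S := by
      rw [← sq_abs v]; ring
    have h5 : D * v ^ 2 ≤ R * v ^ 2 := mul_le_mul_of_nonneg_right hDR (sq_nonneg v)
    linarith
  have hEpos : (0:ℝ) < Real.exp (2 * M) := Real.exp_pos _
  have h3 : Real.exp (2 * M) * ((-(Real.exp (-(L + M)) * a * b)) * v * G - R * v ^ 2)
      ≤ c * C₁ * (|v| * S) := by
    calc Real.exp (2 * M) * ((-(Real.exp (-(L + M)) * a * b)) * v * G - R * v ^ 2)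
        ≤ Real.exp (2 * M) * (D * |v| * S) :=
          mul_le_mul_of_nonneg_left bracket_le (le_of_lt hEpos)
      _ = (Real.exp (2 * M) * D) * (|v| * S) := by ring
      _ ≤ c * C₁ * (|v| * S) :=
          mul_le_mul_of_nonneg_right hED (by positivity)
  have h4 : 4 * Real.pi * s *
      (Real.exp (2 * M) * ((-(Real.exp (-(L + M)) * a * b)) * v * G - R * v ^ 2))
      ≤ 4 * Real.pi * s * (c * C₁ * (|v| * S)) :=
    mul_le_mul_of_nonneg_left h3 (by positivity)
  have h5 : 4 * Real.pi * s * (c * C₁ * (|v| * S)) = 4 * Real.pi * c * C₁ * S * s * |v| := by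
    ring
  have h6 : 4 * Real.pi * c * C₁ * S * s * |v| ≤ 4 * Real.pi * c * C₁ * S * s * u :=
    mul_le_mul_of_nonneg_left hu (by positivity)
  have h7 : v ^ 2 / (2 * s) ≤ u ^ 2 / (2 * s) := by
    have hv2 : v ^ 2 ≤ u ^ 2 := by
      nlinarith [abs_nonneg v, sq_abs v]
    exact (div_le_div_iff_of_pos_right (by positivity)).mpr hv2
  have hexp : v * (4 * Real.pi * s * Real.exp (2 * M) *
        ((-(Real.exp (-(L + M)) * a * b)) * G - R * v) + v / (2 * s))
      = 4 * Real.pi * s *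
          (Real.exp (2 * M) * ((-(Real.exp (-(L + M)) * a * b)) * v * G - R * v ^ 2))
        + v ^ 2 / (2 * s) := by ring
  rw [hexp]
  linarith

/-- for a global plane symmetric solution of the Einstein–scalar
field system (`f ≡ 0`) normalized so that `e^{μ−λ} = c t`, with
`|∂_tφ ∂_rφ| ≤ C₁/s`, any solution of the geodesic equations in coordinate time
satisfies `|w(t)| ≤ C t²`. -/
theorem geodesic_w_bound (lam mu phi : ℝ → ℝ → ℝ) (c C₁ m F : ℝ)
    (hc : 0 < c) (hm : 0 ≤ m) (hF : 0 ≤ F)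
    (h : IsEVS 0 ⊤ lam mu phi (fun _ _ _ _ => 0))
    (hnorm : ∀ t r : ℝ, 1 ≤ t → Real.exp (mu t r - lam t r) = c * t)
    (hbd : ∀ s r : ℝ, 1 ≤ s → |ptd phi s r * prd phi s r| ≤ C₁ / s)
    (rr w : ℝ → ℝ)
    (hrODE : ∀ s : ℝ, 1 ≤ s → HasDerivAt rr
      (Real.exp (mu s (rr s) - lam s (rr s)) * w s
        / Real.sqrt (m ^ 2 + w s ^ 2 + F / s ^ 2)) s)
    (hwODE : ∀ s : ℝ, 1 ≤ s → HasDerivAt w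
      (4 * Real.pi * s * Real.exp (2 * mu s (rr s)) *
          (jmom lam mu phi (fun _ _ _ _ => 0) s (rr s)
              * Real.sqrt (m ^ 2 + w s ^ 2 + F / s ^ 2)
            - rho lam mu phi (fun _ _ _ _ => 0) s (rr s) * w s)
        + w s / (2 * s)) s) :
    ∃ C : ℝ, 0 < C ∧ ∀ t : ℝ, 1 ≤ t → |w t| ≤ C * t ^ 2 := by
  classical
  have hC₁ : 0 ≤ C₁ := by
    have h1 := hbd 1 0 le_rfl
    have h0 : (0:ℝ) ≤ |ptd phi 1 0 * prd phi 1 0| := abs_nonneg _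
    simp only [div_one] at h1
    linarith
  set S : ℝ := Real.sqrt (m ^ 2 + F) with hS_def
  have hS0 : 0 ≤ S := Real.sqrt_nonneg _
  set A : ℝ := 4 * Real.pi * c * C₁ * S with hA_def
  have hA : 0 ≤ A := by positivity
  set u : ℝ → ℝ := fun s => Real.sqrt (w s ^ 2 + 1) with hu_def
  have hupos : ∀ s, 0 < u s := by
    intro s; exact Real.sqrt_pos.mpr (by positivity)
  have huw : ∀ s, |w s| ≤ u s := by
    intro s
    rw [hu_def]
    rw [← Real.sqrt_sq_eq_abs]
    exact Real.sqrt_le_sqrt (by nlinarith)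
  set Wd : ℝ → ℝ := fun s => 4 * Real.pi * s * Real.exp (2 * mu s (rr s)) *
          (jmom lam mu phi (fun _ _ _ _ => 0) s (rr s)
              * Real.sqrt (m ^ 2 + w s ^ 2 + F / s ^ 2)
            - rho lam mu phi (fun _ _ _ _ => 0) s (rr s) * w s)
        + w s / (2 * s) with hWd_def
  have hwODE' : ∀ s : ℝ, 1 ≤ s → HasDerivAt w (Wd s) s := hwODE
  -- the matter quantities for f ≡ 0
  have hj : ∀ s r, jmom lam mu phi (fun _ _ _ _ => 0) s r
      = -(Real.exp (-(lam s r + mu s r)) * ptd phi s r * prd phi s r) := by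
    intro s r; simp [jmom]
  have hρ : ∀ s r, rho lam mu phi (fun _ _ _ _ => 0) s r
      = (1/2) * (Real.exp (-2 * mu s r) * (ptd phi s r) ^ 2
          + Real.exp (-2 * lam s r) * (prd phi s r) ^ 2) := by
    intro s r; simp [rho]
  -- key differential inequality
  have key : ∀ s : ℝ, 1 ≤ s → w s * Wd s ≤ A * s * u s + u s ^ 2 / (2 * s) := by
    intro s hs
    have hs0 : (0:ℝ) < s := by linarith
    have hGle : Real.sqrt (m ^ 2 + w s ^ 2 + F / s ^ 2) ≤ |w s| + S := by
      rw [hS_def]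
      have hdiv : F / s ^ 2 ≤ F := by
        rw [div_le_iff₀ (by positivity)]
        nlinarith [mul_nonneg hF (show (0:ℝ) ≤ s ^ 2 - 1 by nlinarith)]
      have h1 : m ^ 2 + w s ^ 2 + F / s ^ 2 ≤ (|w s| + Real.sqrt (m ^ 2 + F)) ^ 2 := by
        have hsq : Real.sqrt (m ^ 2 + F) ^ 2 = m ^ 2 + F :=
          Real.sq_sqrt (by positivity)
        nlinarith [abs_nonneg (w s), Real.sqrt_nonneg (m ^ 2 + F), sq_abs (w s)]
      calc Real.sqrt (m ^ 2 + w s ^ 2 + F / s ^ 2)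
          ≤ Real.sqrt ((|w s| + Real.sqrt (m ^ 2 + F)) ^ 2) := Real.sqrt_le_sqrt h1
        _ = |w s| + Real.sqrt (m ^ 2 + F) := Real.sqrt_sq (by positivity)
    have := aux_ineq c C₁ s (ptd phi s (rr s)) (prd phi s (rr s))
      (lam s (rr s)) (mu s (rr s)) (w s)
      (Real.sqrt (m ^ 2 + w s ^ 2 + F / s ^ 2)) S (u s)
      hc hC₁ hs (Real.sqrt_nonneg _) hGle hS0 (hnorm s (rr s) hs)
      (hbd s (rr s) hs) (huw s) (hupos s)
    simp only [hWd_def]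
    rw [hj, hρ, hA_def]
    convert this using 2
  -- derivative of u
  have hud : ∀ s : ℝ, 1 ≤ s →
      HasDerivAt u ((2 * w s * Wd s) / (2 * u s)) s := by
    intro s hs
    have h1 : HasDerivAt (fun x => w x ^ 2 + 1) (2 * w s * Wd s) s := by
      have := ((hwODE' s hs).pow 2).add_const 1
      simpa using this
    have h2 := h1.sqrt (by positivity : w s ^ 2 + 1 ≠ 0)
    rw [hu_def]
    exact h2
  -- fencing
  set B₀ : ℝ := u 1 + A + 1 with hB₀_def
  have hB₀pos : 0 < B₀ := by
    have := hupos 1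
    rw [hB₀_def]; linarith
  have hB₀A : A + 1 ≤ B₀ := by
    have := hupos 1
    rw [hB₀_def]; linarith
  have main : ∀ t : ℝ, 1 ≤ t → u t ≤ B₀ * t ^ 2 := by
    intro t ht
    have hB : ∀ x : ℝ, HasDerivAt (fun s => B₀ * s ^ 2) (B₀ * (2 * x)) x := by
      intro x
      have := (hasDerivAt_pow 2 x).const_mul B₀
      simpa using this
    have hcont : ContinuousOn u (Set.Icc 1 t) := by
      intro x hx
      exact ((hud x hx.1).continuousAt).continuousWithinAt
    have hf' : ∀ x ∈ Set.Ico (1:ℝ) t,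
        HasDerivWithinAt u ((2 * w x * Wd x) / (2 * u x)) (Set.Ici x) x := by
      intro x hx
      exact (hud x hx.1).hasDerivWithinAt
    have ha : u 1 ≤ B₀ * 1 ^ 2 := by
      rw [hB₀_def]; nlinarith
    have bound : ∀ x ∈ Set.Ico (1:ℝ) t, u x = B₀ * x ^ 2 →
        (2 * w x * Wd x) / (2 * u x) < B₀ * (2 * x) := by
      intro x hx hux
      have hx1 : (1:ℝ) ≤ x := hx.1
      have hx0 : (0:ℝ) < x := by linarith
      have hu0 := hupos x
      have hkey := key x hx1
      have hle : (2 * w x * Wd x) / (2 * u x) ≤ A * x + u x / (2 * x) := by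
        rw [div_le_iff₀ (by positivity)]
        have heq : (A * x + u x / (2 * x)) * (2 * u x)
            = 2 * (A * x * u x + u x ^ 2 / (2 * x)) := by
          field_simp
        rw [heq]
        linarith
      have : A * x + u x / (2 * x) < B₀ * (2 * x) := by
        rw [hux]
        have heq2 : B₀ * x ^ 2 / (2 * x) = B₀ * x / 2 := by
          field_simp
        rw [heq2]
        have hpr := mul_pos hx0 (show (0:ℝ) < 3 * B₀ / 2 - A by linarith)
        nlinarith [hpr]
      linarith
    have := image_le_of_deriv_right_lt_deriv_boundary hcont hf' ha hB bound
      (Set.right_mem_Icc.mpr ht)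
    exact this
  refine ⟨B₀, hB₀pos, fun t ht => ?_⟩
  calc |w t| ≤ u t := huw t
    _ ≤ B₀ * t ^ 2 := main t ht
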